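/- For n ∈ {0, 2} and all real numbers r, s with 0 < r ≤ s < 1, ∫_0^1 (cos(r t) − cos(s t)) (1−t²)^{n−1/2} dt ≤ π (s² − r²) / (28n + 8). -/

import Mathlib

open Real Set intervalIntegral

lemma inv_sqrt_integrable :
    IntervalIntegrable (fun t : ℝ => (Real.sqrt (1 - t ^ 2))⁻¹) MeasureTheory.volume 0 1 := by
  have h1 : IntervalIntegrable (fun x : ℝ => x ^ (-(1/2) : ℝ)) MeasureTheory.volume 0 1 :=
    intervalIntegral.intervalIntegrable_rpow' (by norm_num)
  have h2 : IntervalIntegrable (fun x : ℝ => (1 - x) ^ (-(1/2) : ℝ)) MeasureTheory.volume 0 1 := by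
    simpa using (h1.comp_sub_left 1).symm
  refine h2.mono_fun' ?_ ?_
  · exact ((Real.continuous_sqrt.comp (by continuity)).measurable.inv).aestronglyMeasurable
  · rw [Filter.EventuallyLE, MeasureTheory.ae_restrict_iff' measurableSet_uIoc]
    filter_upwards with t ht
    rw [uIoc_of_le (by norm_num : (0:ℝ) ≤ 1), Set.mem_Ioc] at ht
    rcases eq_or_lt_of_le ht.2 with h | h
    · subst h
      simp
    · have h1t : 0 < 1 - t := by linarith
      have h1t2 : 0 < 1 - t ^ 2 := by nlinarith [ht.1]
      rw [Real.norm_eq_abs, abs_of_nonneg (by positivity), Real.rpow_neg h1t.le,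
        ← Real.sqrt_eq_rpow]
      exact inv_anti₀ (Real.sqrt_pos.mpr h1t)
        (Real.sqrt_le_sqrt (by nlinarith [ht.1]))

lemma integral_sq_inv_sqrt :
    ∫ t in (0:ℝ)..1, t ^ 2 * (Real.sqrt (1 - t ^ 2))⁻¹ = π / 4 := by
  have hint : IntervalIntegrable (fun t : ℝ => t ^ 2 * (Real.sqrt (1 - t ^ 2))⁻¹)
      MeasureTheory.volume 0 1 :=
    inv_sqrt_integrable.continuousOn_mul (by fun_prop)
  have key := intervalIntegral.integral_eq_sub_of_hasDeriv_right_of_le (a := 0) (b := 1)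
    (f := fun t => (Real.arcsin t - t * Real.sqrt (1 - t ^ 2)) / 2)
    (f' := fun t => t ^ 2 * (Real.sqrt (1 - t ^ 2))⁻¹)
    (by norm_num)
    (by apply ContinuousOn.div_const; apply ContinuousOn.sub
        · exact Real.continuous_arcsin.continuousOn
        · exact (continuous_id.mul (Real.continuous_sqrt.comp (by continuity))).continuousOn)
    (fun t ht => ?_) hint
  · rw [key]
    simp [Real.arcsin_one]
    ring
  · obtain ⟨ht0, ht1⟩ := ht
    have h2 : 0 < 1 - t ^ 2 := by nlinarith
    have hsq : 0 < Real.sqrt (1 - t ^ 2) := Real.sqrt_pos.mpr h2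
    apply HasDerivAt.hasDerivWithinAt
    have ha : HasDerivAt Real.arcsin (1 / Real.sqrt (1 - t ^ 2)) t :=
      Real.hasDerivAt_arcsin (by nlinarith) (by nlinarith)
    have hin : HasDerivAt (fun t : ℝ => 1 - t ^ 2) (-(2 * t)) t := by
      simpa using ((hasDerivAt_pow 2 t).const_sub 1)
    have hs : HasDerivAt (fun t : ℝ => Real.sqrt (1 - t ^ 2))
        (-(2 * t) / (2 * Real.sqrt (1 - t ^ 2))) t :=
      (Real.hasDerivAt_sqrt h2.ne').comp t hin |>.congr_deriv (by ring)
    have hprod : HasDerivAt (fun t : ℝ => t * Real.sqrt (1 - t ^ 2))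
        (1 * Real.sqrt (1 - t ^ 2) + t * (-(2 * t) / (2 * Real.sqrt (1 - t ^ 2)))) t :=
      (hasDerivAt_id t).mul hs
    have := (ha.sub hprod).div_const 2
    convert this using 1
    · rfl
    · rfl
    have hss : Real.sqrt (1 - t ^ 2) * Real.sqrt (1 - t ^ 2) = 1 - t ^ 2 :=
      Real.mul_self_sqrt h2.le
    field_simp
    nlinarith [hss]

lemma integral_sin_sq_cos_pow_four :
    ∫ x in (0:ℝ)..(π/2), Real.sin x ^ 2 * Real.cos x ^ 4 = π / 32 := by
  have h2 : ∫ x in (0:ℝ)..(π/2), Real.cos x ^ 2 = π / 4 := by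
    rw [integral_cos_sq]; simp; ring
  have h4 : ∫ x in (0:ℝ)..(π/2), Real.cos x ^ 4 = 3 * π / 16 := by
    have := integral_cos_pow (a := 0) (b := π/2) (n := 2)
    rw [h2] at this
    norm_num at this
    linarith [this]
  have h6 : ∫ x in (0:ℝ)..(π/2), Real.cos x ^ 6 = 15 * π / 96 := by
    have := integral_cos_pow (a := 0) (b := π/2) (n := 4)
    rw [h4] at this
    norm_num at this
    linarith [this]
  have hcongr : ∫ x in (0:ℝ)..(π/2), Real.sin x ^ 2 * Real.cos x ^ 4
      = ∫ x in (0:ℝ)..(π/2), (Real.cos x ^ 4 - Real.cos x ^ 6) := by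
    apply intervalIntegral.integral_congr
    intro x hx
    simp only []
    rw [Real.sin_sq]
    ring
  rw [hcongr, intervalIntegral.integral_sub (by apply Continuous.intervalIntegrable; fun_prop)
    (by apply Continuous.intervalIntegrable; fun_prop), h4, h6]
  ring

lemma integral_sq_mul_pow32 :
    ∫ t in (0:ℝ)..1, t ^ 2 * ((1 - t ^ 2) * Real.sqrt (1 - t ^ 2)) = π / 32 := by
  have hg : Continuous fun u : ℝ => u ^ 2 * ((1 - u ^ 2) * Real.sqrt (1 - u ^ 2)) := by
    continuity
  have hsub := intervalIntegral.integral_comp_mul_deriv (a := 0) (b := π/2)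
    (f := Real.sin) (f' := Real.cos)
    (g := fun u => u ^ 2 * ((1 - u ^ 2) * Real.sqrt (1 - u ^ 2)))
    (fun x _ => Real.hasDerivAt_sin x) Real.continuousOn_cos hg
  rw [Real.sin_zero, Real.sin_pi_div_two] at hsub
  rw [← hsub, ← integral_sin_sq_cos_pow_four]
  apply intervalIntegral.integral_congr
  intro x hx
  rw [uIcc_of_le (by positivity), Set.mem_Icc] at hx
  have hcos : 0 ≤ Real.cos x := Real.cos_nonneg_of_mem_Icc ⟨by linarith [hx.1], hx.2⟩
  have h1 : 1 - Real.sin x ^ 2 = Real.cos x ^ 2 := by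
    nlinarith [Real.sin_sq_add_cos_sq x]
  simp only [Function.comp]
  rw [h1, Real.sqrt_sq hcos]
  ring

lemma cos_sub_cos_le (r s t : ℝ) (hr : 0 ≤ r) (hrs : r ≤ s) (ht : 0 ≤ t) :
    Real.cos (r * t) - Real.cos (s * t) ≤ (s ^ 2 - r ^ 2) / 2 * t ^ 2 := by
  have hle : r * t ≤ s * t := mul_le_mul_of_nonneg_right hrs ht
  have h1 : Real.cos (r * t) - Real.cos (s * t) = ∫ x in (r*t)..(s*t), Real.sin x := by
    rw [integral_sin]
  rw [h1]
  have h2 : (∫ x in (r*t)..(s*t), Real.sin x) ≤ ∫ x in (r*t)..(s*t), x := by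
    apply intervalIntegral.integral_mono_on hle
      (Real.continuous_sin.intervalIntegrable _ _) (continuous_id.intervalIntegrable _ _)
    intro x hx
    exact Real.sin_le (le_trans (by positivity) hx.1)
  calc (∫ x in (r*t)..(s*t), Real.sin x) ≤ ∫ x in (r*t)..(s*t), x := h2
    _ = ((s*t)^2 - (r*t)^2)/2 := integral_id
    _ = (s ^ 2 - r ^ 2) / 2 * t ^ 2 := by ring

theorem integral_cos_sub_cos_bound (n : ℕ) (hn : n = 0 ∨ n = 2) (r s : ℝ)
    (hr : 0 < r) (hrs : r ≤ s) (hs : s < 1) :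
    ∫ t in (0 : ℝ)..1, (Real.cos (r * t) - Real.cos (s * t)) * (1 - t ^ 2) ^ ((n : ℝ) - 1 / 2) ≤
      Real.pi * (s ^ 2 - r ^ 2) / (28 * n + 8) := by
  have hsr : 0 ≤ (s ^ 2 - r ^ 2) / 2 := by nlinarith
  rcases hn with hn | hn <;> subst hn
  · -- n = 0
    have hcongr : ∫ t in (0 : ℝ)..1,
        (Real.cos (r * t) - Real.cos (s * t)) * (1 - t ^ 2) ^ (((0:ℕ) : ℝ) - 1 / 2)
        = ∫ t in (0 : ℝ)..1,
        (Real.cos (r * t) - Real.cos (s * t)) * (Real.sqrt (1 - t ^ 2))⁻¹ := by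
      apply intervalIntegral.integral_congr
      intro t ht
      rw [uIcc_of_le (by norm_num : (0:ℝ) ≤ 1), Set.mem_Icc] at ht
      have h2 : (0:ℝ) ≤ 1 - t ^ 2 := by nlinarith [ht.1, ht.2]
      simp only []
      rw [show ((0:ℕ) : ℝ) - 1/2 = -(1/2) by norm_num, Real.rpow_neg h2,
        ← Real.sqrt_eq_rpow]
    rw [hcongr]
    have hmono : (∫ t in (0 : ℝ)..1,
        (Real.cos (r * t) - Real.cos (s * t)) * (Real.sqrt (1 - t ^ 2))⁻¹)
        ≤ ∫ t in (0 : ℝ)..1, (s ^ 2 - r ^ 2) / 2 * (t ^ 2 * (Real.sqrt (1 - t ^ 2))⁻¹) := by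
      apply intervalIntegral.integral_mono_on (by norm_num)
        (inv_sqrt_integrable.continuousOn_mul (Continuous.continuousOn (by fun_prop)))
        ((inv_sqrt_integrable.continuousOn_mul (Continuous.continuousOn (by fun_prop))).const_mul _)
      intro t ht
      have hb := cos_sub_cos_le r s t hr.le hrs ht.1
      have hpos : (0:ℝ) ≤ (Real.sqrt (1 - t ^ 2))⁻¹ := by positivity
      calc (Real.cos (r * t) - Real.cos (s * t)) * (Real.sqrt (1 - t ^ 2))⁻¹
          ≤ (s ^ 2 - r ^ 2) / 2 * t ^ 2 * (Real.sqrt (1 - t ^ 2))⁻¹ :=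
            mul_le_mul_of_nonneg_right hb hpos
        _ = (s ^ 2 - r ^ 2) / 2 * (t ^ 2 * (Real.sqrt (1 - t ^ 2))⁻¹) := by ring
    calc _ ≤ ∫ t in (0 : ℝ)..1, (s ^ 2 - r ^ 2) / 2 * (t ^ 2 * (Real.sqrt (1 - t ^ 2))⁻¹) := hmono
      _ = (s ^ 2 - r ^ 2) / 2 * (π / 4) := by
          rw [intervalIntegral.integral_const_mul, integral_sq_inv_sqrt]
      _ = π * (s ^ 2 - r ^ 2) / (28 * (0:ℕ) + 8) := by push_cast; ring
  · -- n = 2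
    have hcongr : ∫ t in (0 : ℝ)..1,
        (Real.cos (r * t) - Real.cos (s * t)) * (1 - t ^ 2) ^ (((2:ℕ) : ℝ) - 1 / 2)
        = ∫ t in (0 : ℝ)..1,
        (Real.cos (r * t) - Real.cos (s * t)) * ((1 - t ^ 2) * Real.sqrt (1 - t ^ 2)) := by
      apply intervalIntegral.integral_congr
      intro t ht
      rw [uIcc_of_le (by norm_num : (0:ℝ) ≤ 1), Set.mem_Icc] at ht
      have h2 : (0:ℝ) ≤ 1 - t ^ 2 := by nlinarith [ht.1, ht.2]
      simp only []
      rw [show ((2:ℕ) : ℝ) - 1/2 = 1 + 1/2 by norm_num, Real.rpow_add' h2 (by norm_num),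
        Real.rpow_one, ← Real.sqrt_eq_rpow]
    rw [hcongr]
    have hcont : Continuous fun t : ℝ =>
        (s ^ 2 - r ^ 2) / 2 * (t ^ 2 * ((1 - t ^ 2) * Real.sqrt (1 - t ^ 2))) := by fun_prop
    have hcont2 : Continuous fun t : ℝ =>
        (Real.cos (r * t) - Real.cos (s * t)) * ((1 - t ^ 2) * Real.sqrt (1 - t ^ 2)) := by
      fun_prop
    have hmono : (∫ t in (0 : ℝ)..1,
        (Real.cos (r * t) - Real.cos (s * t)) * ((1 - t ^ 2) * Real.sqrt (1 - t ^ 2)))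
        ≤ ∫ t in (0 : ℝ)..1,
          (s ^ 2 - r ^ 2) / 2 * (t ^ 2 * ((1 - t ^ 2) * Real.sqrt (1 - t ^ 2))) := by
      apply intervalIntegral.integral_mono_on (by norm_num)
        (hcont2.intervalIntegrable _ _) (hcont.intervalIntegrable _ _)
      intro t ht
      have h2 : (0:ℝ) ≤ 1 - t ^ 2 := by nlinarith [ht.1, ht.2]
      have hb := cos_sub_cos_le r s t hr.le hrs ht.1
      have hpos : (0:ℝ) ≤ (1 - t ^ 2) * Real.sqrt (1 - t ^ 2) := by positivity
      calc (Real.cos (r * t) - Real.cos (s * t)) * ((1 - t ^ 2) * Real.sqrt (1 - t ^ 2))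
          ≤ (s ^ 2 - r ^ 2) / 2 * t ^ 2 * ((1 - t ^ 2) * Real.sqrt (1 - t ^ 2)) :=
            mul_le_mul_of_nonneg_right hb hpos
        _ = (s ^ 2 - r ^ 2) / 2 * (t ^ 2 * ((1 - t ^ 2) * Real.sqrt (1 - t ^ 2))) := by ring
    calc _ ≤ _ := hmono
      _ = (s ^ 2 - r ^ 2) / 2 * (π / 32) := by
          rw [intervalIntegral.integral_const_mul, integral_sq_mul_pow32]
      _ = π * (s ^ 2 - r ^ 2) / (28 * (2:ℕ) + 8) := by push_cast; ring
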